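/- arXiv:1705.10466 — 2 statements merged into one kernel-verified Lean document; each statement's English description precedes it below -/
import Mathlib

section
/- Let 1/2 < H1 < 1 and 1/2 < H2 < 1 with H1 + H2 < 2, and let 0 < u ≤ v. Then ∫₀^u r^{1-H1-H2} (u-r)^{H1-3/2} (v-r)^{H2-3/2} dr = (v-u)^{H1+H2-2} · u^{1/2-H2} · v^{1/2-H1} · B(H1-1/2, 2-H1-H2), where B denotes the Beta function. -/
open MeasureTheory Set

noncomputable def Beta (a b : ℝ) : ℝ := ∫ t in Set.Ioo (0:ℝ) 1, t ^ (a-1) * (1-t) ^ (b-1)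

lemma aux_log {A B C T S D p q s : ℝ} (hA : 0 < A) (hB : 0 < B) (hC : 0 < C)
    (hT : 0 < T) (hS : 0 < S) (hD : 0 < D) (hpqs : p + q + s + 2 = 0) :
    (A*B*C/D^2) * ((A*B*S/D)^p * (A*T*C/D)^q * (B*C/D)^s)
      = C^(q+s+1) * A^(p+q+1) * B^(p+s+1) * (T^q * S^p) := by
  have hL : 0 < (A*B*C/D^2) * ((A*B*S/D)^p * (A*T*C/D)^q * (B*C/D)^s) := by positivity
  have hR : 0 < C^(q+s+1) * A^(p+q+1) * B^(p+s+1) * (T^q * S^p) := by positivity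
  have l1 : Real.log ((A*B*S/D)^p)
      = p * (Real.log A + Real.log B + Real.log S - Real.log D) := by
    rw [Real.log_rpow (by positivity), Real.log_div (by positivity) hD.ne',
      Real.log_mul (by positivity) hS.ne', Real.log_mul hA.ne' hB.ne']
  have l2 : Real.log ((A*T*C/D)^q)
      = q * (Real.log A + Real.log T + Real.log C - Real.log D) := by
    rw [Real.log_rpow (by positivity), Real.log_div (by positivity) hD.ne',
      Real.log_mul (by positivity) hC.ne', Real.log_mul hA.ne' hT.ne']
  have l3 : Real.log ((B*C/D)^s)
      = s * (Real.log B + Real.log C - Real.log D) := by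
    rw [Real.log_rpow (by positivity), Real.log_div (by positivity) hD.ne',
      Real.log_mul hB.ne' hC.ne']
  have l0 : Real.log (A*B*C/D^2)
      = Real.log A + Real.log B + Real.log C - 2 * Real.log D := by
    rw [Real.log_div (by positivity) (by positivity), Real.log_mul (by positivity) hC.ne',
      Real.log_mul hA.ne' hB.ne', Real.log_pow]
    push_cast; ring
  have hx0 : A*B*C/D^2 ≠ 0 := by positivity
  have hx1 : (A*B*S/D)^p ≠ 0 := by positivity
  have hx2 : (A*T*C/D)^q ≠ 0 := by positivity
  have hx3 : (B*C/D)^s ≠ 0 := by positivity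
  have hy1 : C^(q+s+1) ≠ 0 := by positivity
  have hy2 : A^(p+q+1) ≠ 0 := by positivity
  have hy3 : B^(p+s+1) ≠ 0 := by positivity
  have hy4 : T^q ≠ 0 := by positivity
  have hy5 : S^p ≠ 0 := by positivity
  have key : Real.log ((A*B*C/D^2) * ((A*B*S/D)^p * (A*T*C/D)^q * (B*C/D)^s))
      = Real.log (C^(q+s+1) * A^(p+q+1) * B^(p+s+1) * (T^q * S^p)) := by
    rw [Real.log_mul hx0 (mul_ne_zero (mul_ne_zero hx1 hx2) hx3),
      Real.log_mul (mul_ne_zero hx1 hx2) hx3, Real.log_mul hx1 hx2, l0, l1, l2, l3,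
      Real.log_mul (mul_ne_zero (mul_ne_zero hy1 hy2) hy3) (mul_ne_zero hy4 hy5),
      Real.log_mul (mul_ne_zero hy1 hy2) hy3, Real.log_mul hy1 hy2, Real.log_mul hy4 hy5,
      Real.log_rpow hC, Real.log_rpow hA, Real.log_rpow hB, Real.log_rpow hT, Real.log_rpow hS]
    linear_combination (-(Real.log D)) * hpqs
  calc (A*B*C/D^2) * ((A*B*S/D)^p * (A*T*C/D)^q * (B*C/D)^s)
      = Real.exp (Real.log ((A*B*C/D^2) * ((A*B*S/D)^p * (A*T*C/D)^q * (B*C/D)^s))) :=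
        (Real.exp_log hL).symm
    _ = Real.exp (Real.log (C^(q+s+1) * A^(p+q+1) * B^(p+s+1) * (T^q * S^p))) := by rw [key]
    _ = _ := Real.exp_log hR

theorem stmt_0 (H1 H2 u v : ℝ)
    (hH1 : 1/2 < H1 ∧ H1 < 1) (hH2 : 1/2 < H2 ∧ H2 < 1) (hsum : H1 + H2 < 2)
    (hu : 0 < u) (huv : u ≤ v) :
    ∫ r in Set.Ioo (0:ℝ) u,
        r ^ (1 - H1 - H2) * (u - r) ^ (H1 - 3/2) * (v - r) ^ (H2 - 3/2)
      = (v - u) ^ (H1 + H2 - 2) * u ^ (1/2 - H2) * v ^ (1/2 - H1)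
          * Beta (H1 - 1/2) (2 - H1 - H2) := by
  obtain ⟨hH1a, hH1b⟩ := hH1
  obtain ⟨hH2a, hH2b⟩ := hH2
  rcases eq_or_lt_of_le huv with heq | hlt
  · -- degenerate case u = v : both sides are 0
    subst heq
    rw [sub_self, Real.zero_rpow (by linarith), zero_mul, zero_mul, zero_mul]
    apply integral_undef
    intro h
    have hmeas : AEStronglyMeasurable (fun r : ℝ => u^(1-H1-H2) * (u-r)^(H1+H2-3))
        (volume.restrict (Ioo (0:ℝ) u)) := by
      apply Measurable.aestronglyMeasurable
      fun_prop
    have hmono : ∀ᵐ r ∂(volume.restrict (Ioo (0:ℝ) u)),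
        ‖u^(1-H1-H2) * (u-r)^(H1+H2-3)‖
          ≤ r ^ (1 - H1 - H2) * (u - r) ^ (H1 - 3/2) * (u - r) ^ (H2 - 3/2) := by
      filter_upwards [ae_restrict_mem measurableSet_Ioo] with r hr
      have hr0 : 0 < r := hr.1
      have hru : 0 < u - r := by linarith [hr.2]
      rw [Real.norm_eq_abs, abs_of_nonneg (by positivity)]
      have e : (u - r) ^ (H1 - 3/2) * (u - r) ^ (H2 - 3/2) = (u-r)^(H1+H2-3) := by
        rw [← Real.rpow_add hru]; ring_nf
      rw [mul_assoc, e]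
      apply mul_le_mul_of_nonneg_right _ (by positivity)
      exact Real.rpow_le_rpow_of_nonpos hr0 (le_of_lt hr.2) (by linarith)
    have h2 : Integrable (fun r : ℝ => u^(1-H1-H2) * (u-r)^(H1+H2-3))
        (volume.restrict (Ioo (0:ℝ) u)) := h.mono' hmeas hmono
    have h3 : IntegrableOn (fun r : ℝ => (u-r)^(H1+H2-3)) (Ioo (0:ℝ) u) := by
      have := h2.const_mul ((u:ℝ)^(1-H1-H2))⁻¹
      have hne : (u:ℝ)^(1-H1-H2) ≠ 0 := (Real.rpow_pos_of_pos hu _).ne'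
      simpa [IntegrableOn, ← mul_assoc, inv_mul_cancel₀ hne] using this
    have h4 : IntervalIntegrable (fun r : ℝ => (u-r)^(H1+H2-3)) volume 0 u := by
      rwa [intervalIntegrable_iff_integrableOn_Ioo_of_le hu.le]
    have h5 : IntervalIntegrable (fun x : ℝ => x ^ (H1+H2-3)) volume 0 u := by
      have := (h4.comp_sub_left u).symm
      simpa using this
    have h6 : IntegrableOn (fun x : ℝ => x ^ (H1+H2-3)) (Ioo (0:ℝ) u) := by
      rwa [intervalIntegrable_iff_integrableOn_Ioo_of_le hu.le] at h5
    have := (intervalIntegral.integrableOn_Ioo_rpow_iff hu).mp h6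
    linarith
  · -- main case u < v
    have hv : 0 < v := lt_trans hu hlt
    have hvu : 0 < v - u := by linarith
    set φ : ℝ → ℝ := fun t => u*v*(1-t)/(v-u*t) with hφ
    set φ' : ℝ → ℝ := fun t => -(u*v*(v-u))/(v-u*t)^2 with hφ'
    have hDpos : ∀ t ∈ Ioo (0:ℝ) 1, 0 < v - u*t := by
      intro t ht
      nlinarith [ht.1, ht.2]
    have himage : φ '' Ioo (0:ℝ) 1 = Ioo (0:ℝ) u := by
      ext r
      constructor
      · rintro ⟨t, ht, rfl⟩
        have hD := hDpos t ht
        obtain ⟨ht0, ht1⟩ := ht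
        constructor
        · exact div_pos (by nlinarith [mul_pos (mul_pos hu hv) (show (0:ℝ) < 1 - t by linarith)]) hD
        · rw [hφ]
          simp only
          rw [div_lt_iff₀ hD]
          nlinarith [mul_pos (mul_pos hu ht0) hvu]
      · rintro ⟨hr0, hru⟩
        have hvr : 0 < v - r := by linarith
        refine ⟨v*(u-r)/(u*(v-r)), ⟨?_, ?_⟩, ?_⟩
        · exact div_pos (by nlinarith [mul_pos hv (show (0:ℝ) < u - r by linarith)]) (by positivity)
        · rw [div_lt_one (by positivity)]
          nlinarith
        · rw [hφ]
          simp only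
          have hsub : v - u * (v*(u-r)/(u*(v-r))) = v*(v-u)/(v-r) := by
            field_simp
            ring
          rw [hsub]
          rw [div_eq_iff (by positivity)]
          field_simp
          ring
    have hinj : InjOn φ (Ioo (0:ℝ) 1) := by
      intro a ha b hb hab
      have hDa := hDpos a ha
      have hDb := hDpos b hb
      rw [hφ] at hab
      simp only at hab
      rw [div_eq_div_iff hDa.ne' hDb.ne'] at hab
      have h0 : (a - b) * (u*v*(v-u)) = 0 := by linear_combination -hab
      rcases mul_eq_zero.mp h0 with h | h
      · linarith
      · exact absurd h (ne_of_gt (mul_pos (mul_pos hu hv) hvu))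
    have hderiv : ∀ t ∈ Ioo (0:ℝ) 1, HasDerivWithinAt φ (φ' t) (Ioo (0:ℝ) 1) t := by
      intro t ht
      have hD := hDpos t ht
      have h1 : HasDerivAt (fun t : ℝ => u*v*(1-t)) (-(u*v)) t := by
        simpa using ((hasDerivAt_id t).const_sub 1).const_mul (u*v)
      have h2 : HasDerivAt (fun t : ℝ => v - u*t) (-u) t := by
        simpa using ((hasDerivAt_id t).const_mul u).const_sub v
      have h3 := h1.div h2 hD.ne'
      have he : (-(u*v) * (v - u*t) - u*v*(1-t) * (-u)) / (v-u*t)^2 = φ' t := by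
        rw [hφ']
        simp only
        congr 1
        ring
      rw [← he]
      exact h3.hasDerivWithinAt
    rw [← himage, integral_image_eq_integral_abs_deriv_smul measurableSet_Ioo hderiv hinj]
    rw [Beta, ← MeasureTheory.integral_const_mul]
    apply setIntegral_congr_fun measurableSet_Ioo
    intro t ht
    have hD := hDpos t ht
    obtain ⟨ht0, ht1⟩ := ht
    have ht1' : 0 < 1 - t := by linarith
    simp only [smul_eq_mul]
    have e1 : u - φ t = u*t*(v-u)/(v-u*t) := by
      rw [hφ]; simp only
      field_simp
      ring
    have e2 : v - φ t = v*(v-u)/(v-u*t) := by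
      rw [hφ]; simp only
      field_simp
      ring
    have e3 : |φ' t| = u*v*(v-u)/(v-u*t)^2 := by
      rw [hφ']
      simp only
      rw [neg_div, abs_neg, abs_of_pos (by positivity)]
    rw [e1, e2, e3, hφ]
    simp only
    have := aux_log (A := u) (B := v) (C := v - u) (T := t) (S := 1 - t) (D := v - u*t)
      (p := 1 - H1 - H2) (q := H1 - 3/2) (s := H2 - 3/2)
      hu hv hvu ht0 ht1' hD (by ring)
    calc (u*v*(v-u)/(v-u*t)^2) * ((u*v*(1-t)/(v-u*t)) ^ (1-H1-H2)
            * (u*t*(v-u)/(v-u*t)) ^ (H1-3/2) * (v*(v-u)/(v-u*t)) ^ (H2-3/2))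
        = (v-u)^((H1-3/2)+(H2-3/2)+1) * u^((1-H1-H2)+(H1-3/2)+1)
            * v^((1-H1-H2)+(H2-3/2)+1) * (t^(H1-3/2) * (1-t)^(1-H1-H2)) := this
      _ = (v - u) ^ (H1 + H2 - 2) * u ^ (1/2 - H2) * v ^ (1/2 - H1)
            * (t ^ (H1 - 1/2 - 1) * (1 - t) ^ (2 - H1 - H2 - 1)) := by ring_nf
end

section
/- Let 1/2 < H < 1 and let c_H² = H(2H-1)/B(2-2H, H-1/2). Then for all s,t ≥ 0, c_H² · B(H-1/2, 2-2H) · ∫₀^t ∫₀^s |u-v|^{2H-2} dv du = (1/2)(t^{2H} + s^{2H} - |t-s|^{2H}). -/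
open MeasureTheory Set


lemma intAbs {α : ℝ} (hα : -1 < α) (a b : ℝ) :
    IntervalIntegrable (fun x => |x| ^ α) volume a b := by
  have key2 : ∀ c : ℝ, IntervalIntegrable (fun x => |x| ^ α) volume 0 c := by
    have key : ∀ c : ℝ, 0 ≤ c → IntervalIntegrable (fun x => |x| ^ α) volume 0 c := by
      intro c hc
      rw [intervalIntegrable_iff_integrableOn_Ioo_of_le hc]
      refine ((intervalIntegrable_iff_integrableOn_Ioo_of_le hc).mp
        (intervalIntegral.intervalIntegrable_rpow' hα)).congr_fun ?_ measurableSet_Ioo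
      intro x hx
      simp [abs_of_pos hx.1]
    intro c
    rcases le_or_gt 0 c with h | h
    · exact key c h
    · have := (IntervalIntegrable.iff_comp_neg (f := fun x => |x| ^ α) (a := 0) (b := -c) (by simp)).mp (key (-c) (by linarith))
      simp only [abs_neg, neg_neg, neg_zero] at this
      exact this
  exact (key2 a).symm.trans (key2 b)

lemma intS {α : ℝ} (hα : -1 < α) (hα0 : α < 0) (b : ℝ) :
    ∫ x in (0:ℝ)..b, |x| ^ α = Real.sign b * |b| ^ (α+1) / (α+1) := by
  have key : ∀ c : ℝ, 0 < c → ∫ x in (0:ℝ)..c, |x| ^ α = c ^ (α+1) / (α+1) := by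
    intro c hc
    have h1 : ∫ x in (0:ℝ)..c, |x| ^ α = ∫ x in (0:ℝ)..c, x ^ α := by
      refine intervalIntegral.integral_congr_ae ?_
      filter_upwards [] with x
      intro hx2
      rw [uIoc_of_le hc.le] at hx2
      rw [abs_of_pos hx2.1]
    rw [h1, integral_rpow (Or.inl hα), Real.zero_rpow (by linarith), sub_zero]
  rcases lt_trichotomy b 0 with h | h | h
  · have h2 : ∫ x in (0:ℝ)..b, |x| ^ α = ∫ x in (-b)..(0:ℝ), |x| ^ α := by
      have := intervalIntegral.integral_comp_neg (fun x => |x| ^ α) (a := 0) (b := b)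
      simp only [abs_neg, neg_zero] at this
      exact this
    rw [h2, intervalIntegral.integral_symm, key (-b) (by linarith),
      Real.sign_of_neg h, abs_of_neg h]
    ring
  · simp [h, Real.zero_rpow (by linarith : α + 1 ≠ 0)]
  · rw [key b h, Real.sign_of_pos h, abs_of_pos h]; ring

lemma measurable_realSign : Measurable Real.sign := by
  unfold Real.sign
  exact Measurable.ite measurableSet_Iio measurable_const
    (Measurable.ite measurableSet_Ioi measurable_const measurable_const)

lemma intAbsT {β : ℝ} (hβ : 0 ≤ β) (a b : ℝ) :
    IntervalIntegrable (fun x => Real.sign x * |x| ^ β) volume a b := by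
  have hc : Continuous fun x : ℝ => |x| ^ β :=
    (Real.continuous_rpow_const hβ).comp continuous_abs
  refine (_root_.intervalIntegrable_const (c := (1:ℝ)) |>.mul_continuousOn hc.continuousOn).mono_fun ?_ ?_
  · exact ((measurable_realSign.mul (hc.measurable)).aestronglyMeasurable)
  · filter_upwards [] with x
    simp only [norm_mul, Real.norm_eq_abs, one_mul]
    have : |Real.sign x| ≤ 1 := by
      rcases Real.sign_apply_eq x with h | h | h <;> rw [h] <;> norm_num
    calc |Real.sign x| * abs (|x| ^ β) ≤ 1 * abs (|x| ^ β) :=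
          mul_le_mul_of_nonneg_right this (abs_nonneg _)
      _ = abs (|x| ^ β) := one_mul _

lemma intT {β : ℝ} (hβ : 0 < β) (b : ℝ) :
    ∫ x in (0:ℝ)..b, Real.sign x * |x| ^ β = |b| ^ (β+1) / (β+1) := by
  have key : ∀ c : ℝ, 0 < c → ∫ x in (0:ℝ)..c, Real.sign x * |x| ^ β = c ^ (β+1) / (β+1) := by
    intro c hc
    have h1 : ∫ x in (0:ℝ)..c, Real.sign x * |x| ^ β = ∫ x in (0:ℝ)..c, x ^ β := by
      refine intervalIntegral.integral_congr_ae ?_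
      filter_upwards [] with x
      intro hx2
      rw [uIoc_of_le hc.le] at hx2
      rw [abs_of_pos hx2.1, Real.sign_of_pos hx2.1, one_mul]
    rw [h1, integral_rpow (Or.inl (by linarith)), Real.zero_rpow (by linarith), sub_zero]
  rcases lt_trichotomy b 0 with h | h | h
  · have h2 : ∫ x in (0:ℝ)..b, Real.sign x * |x| ^ β
        = ∫ x in (-b)..(0:ℝ), -(Real.sign x * |x| ^ β) := by
      have := intervalIntegral.integral_comp_neg (fun x => -(Real.sign x * |x| ^ β)) (a := 0) (b := b)
      simp only [abs_neg, Real.sign_neg, neg_mul, neg_neg, neg_zero] at this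
      exact this
    rw [h2, intervalIntegral.integral_neg, intervalIntegral.integral_symm, neg_neg,
      key (-b) (by linarith), abs_of_neg h]
  · simp [h, Real.zero_rpow (by linarith : β + 1 ≠ 0)]
  · rw [key b h, abs_of_pos h]

lemma ioo_int {f : ℝ → ℝ} {b : ℝ} (hb : 0 ≤ b) :
    ∫ x in Ioo (0:ℝ) b, f x = ∫ x in (0:ℝ)..b, f x := by
  rw [intervalIntegral.integral_of_le hb, integral_Ioc_eq_integral_Ioo]

lemma inner_int {α : ℝ} (hα : -1 < α) (hα0 : α < 0) (s u : ℝ) (hs : 0 ≤ s) (hu : 0 < u) :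
    ∫ v in Ioo (0:ℝ) s, |u - v| ^ α
      = (u ^ (α+1) - Real.sign (u-s) * |u-s| ^ (α+1)) / (α+1) := by
  rw [ioo_int hs]
  have h1 : ∫ v in (0:ℝ)..s, |u - v| ^ α = ∫ x in (u-s)..u, |x| ^ α := by
    have := intervalIntegral.integral_comp_sub_left (fun x => |x| ^ α) u (a := 0) (b := s)
    simpa using this
  have h2 : ∫ x in (u-s)..u, |x| ^ α
      = (∫ x in (0:ℝ)..u, |x| ^ α) - ∫ x in (0:ℝ)..(u-s), |x| ^ α :=
    (intervalIntegral.integral_interval_sub_left (intAbs hα 0 u) (intAbs hα 0 (u-s))).symm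
  rw [h1, h2, intS hα hα0, intS hα hα0, Real.sign_of_pos hu, abs_of_pos hu, one_mul]
  ring

lemma double_int {α : ℝ} (hα : -1 < α) (hα0 : α < 0) (s t : ℝ) (hs : 0 ≤ s) (ht : 0 ≤ t) :
    ∫ u in Ioo (0:ℝ) t, ∫ v in Ioo (0:ℝ) s, |u - v| ^ α
      = (t ^ (α+2) + s ^ (α+2) - |t-s| ^ (α+2)) / ((α+2) * (α+1)) := by
  have h1 : α + 1 > 0 := by linarith
  rw [setIntegral_congr_fun measurableSet_Ioo
    (fun u hu => inner_int hα hα0 s u hs hu.1), ioo_int ht]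
  have hA : IntervalIntegrable (fun u : ℝ => u ^ (α+1)) volume 0 t :=
    (Real.continuous_rpow_const h1.le).intervalIntegrable 0 t
  have hB : IntervalIntegrable (fun u : ℝ => Real.sign (u-s) * |u-s| ^ (α+1)) volume 0 t := by
    have := (intAbsT h1.le (0-s) (t-s)).comp_sub_right s
    simpa using this
  have hsub : ∫ u in (0:ℝ)..t, (u ^ (α+1) - Real.sign (u-s) * |u-s| ^ (α+1)) / (α+1)
      = ((∫ u in (0:ℝ)..t, u ^ (α+1))
        - ∫ u in (0:ℝ)..t, Real.sign (u-s) * |u-s| ^ (α+1)) / (α+1) := by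
    rw [← intervalIntegral.integral_sub hA hB, intervalIntegral.integral_div]
  have e1 : ∫ u in (0:ℝ)..t, u ^ (α+1) = t ^ (α+2) / (α+2) := by
    rw [integral_rpow (Or.inl (by linarith)), Real.zero_rpow (by linarith), sub_zero]
    norm_num [show α + 1 + 1 = α + 2 by ring]
  have e2 : ∫ u in (0:ℝ)..t, Real.sign (u-s) * |u-s| ^ (α+1)
      = (|t-s| ^ (α+2) - s ^ (α+2)) / (α+2) := by
    have hcomp := intervalIntegral.integral_comp_sub_right
      (fun x => Real.sign x * |x| ^ (α+1)) s (a := 0) (b := t)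
    rw [hcomp, ← intervalIntegral.integral_interval_sub_left
      (intAbsT h1.le 0 (t-s)) (intAbsT h1.le 0 (0-s)), intT h1, intT h1]
    rw [show (0:ℝ) - s = -s by ring, abs_neg, abs_of_nonneg hs,
      show α + 1 + 1 = α + 2 by ring]
    ring
  rw [hsub, e1, e2]
  have h2 : α + 2 ≠ 0 := by linarith
  field_simp
  ring

lemma Beta_symm (a b : ℝ) : Beta a b = Beta b a := by
  unfold Beta
  rw [ioo_int (by norm_num : (0:ℝ) ≤ 1), ioo_int (by norm_num : (0:ℝ) ≤ 1)]
  have h := intervalIntegral.integral_comp_sub_left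
    (fun t : ℝ => t ^ (b-1) * (1-t) ^ (a-1)) 1 (a := 0) (b := 1)
  simp only [sub_sub_cancel, sub_zero, sub_self] at h
  rw [← h]
  exact intervalIntegral.integral_congr (fun x _ => by ring)

lemma Beta_pos {a b : ℝ} (ha : 0 < a) (hb : 0 < b) : 0 < Beta a b := by
  have key : Beta a b = ∫ t in (0:ℝ)..1, t ^ (a-1) * (1-t) ^ (b-1) :=
    ioo_int (by norm_num)
  have hint : IntervalIntegrable (fun x : ℝ => x ^ (a-1) * (1-x) ^ (b-1)) volume 0 1 := by
    have hC := (Complex.betaIntegral_convergent (u := a) (v := b) (by simpa) (by simpa)).norm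
    rw [intervalIntegrable_iff_integrableOn_Ioo_of_le (by norm_num)] at hC ⊢
    refine hC.congr_fun ?_ measurableSet_Ioo
    intro x hx
    have hx1 : (0:ℝ) < 1 - x := by linarith [hx.2]
    simp only [norm_mul]
    rw [Complex.norm_cpow_eq_rpow_re_of_pos hx.1,
      show (1 - (x:ℂ)) = ((1 - x : ℝ) : ℂ) by push_cast; ring,
      Complex.norm_cpow_eq_rpow_re_of_pos hx1]
    norm_num
  rw [key]
  refine intervalIntegral.intervalIntegral_pos_of_pos_on hint (fun x hx => ?_) (by norm_num)
  exact mul_pos (Real.rpow_pos_of_pos hx.1 _) (Real.rpow_pos_of_pos (by linarith [hx.2]) _)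

theorem stmt_1 (H cH2 : ℝ) (hH : 1/2 < H ∧ H < 1)
    (hc : cH2 = H * (2*H - 1) / Beta (2 - 2*H) (H - 1/2)) :
    ∀ s t : ℝ, 0 ≤ s → 0 ≤ t →
      cH2 * Beta (H - 1/2) (2 - 2*H)
          * ∫ u in Set.Ioo (0:ℝ) t, ∫ v in Set.Ioo (0:ℝ) s, |u - v| ^ (2*H - 2)
        = (1/2) * (t ^ (2*H) + s ^ (2*H) - |t - s| ^ (2*H)) := by
  obtain ⟨hH1, hH2⟩ := hH
  intro s t hs ht
  have hd := double_int (α := 2*H - 2) (by linarith) (by linarith) s t hs ht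
  rw [show 2*H - 2 + 2 = 2*H by ring, show 2*H - 2 + 1 = 2*H - 1 by ring] at hd
  have hBpos : 0 < Beta (2 - 2*H) (H - 1/2) := Beta_pos (by linarith) (by linarith)
  have hcB : cH2 * Beta (H - 1/2) (2 - 2*H) = H * (2*H - 1) := by
    rw [hc, Beta_symm (H - 1/2) (2 - 2*H), div_mul_cancel₀ _ hBpos.ne']
  rw [hcB, hd]
  have h1 : (2*H : ℝ) ≠ 0 := by linarith
  have h2 : (2*H - 1 : ℝ) ≠ 0 := by linarith
  have h3 : (H*2 - 1 : ℝ) ≠ 0 := by linarith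
  field_simp
end
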